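/- Let H be a complex Hilbert space, D ∈ B(H) a self-adjoint bounded operator, and f : ℝ → H a continuously differentiable function with compact support such that Re⟨f(0), D f(0)⟩ ≤ 0. Then ∫_{(0,∞)} ‖f′(t)‖² dt ≤ ∫_{(0,∞)} ‖f′(t) + D f(t)‖² dt and ∫_{(0,∞)} ‖D f(t)‖² dt ≤ ∫_{(0,∞)} ‖f′(t) + D f(t)‖² dt. -/

import Mathlib

open MeasureTheory

/-- If in addition `Re⟨f(0), D f(0)⟩ ≤ 0` (the APS boundary condition),
then both `∫₀^∞ ‖f'‖²` and `∫₀^∞ ‖Df‖²` are dominated by `∫₀^∞ ‖f' + Df‖²`. -/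
theorem stmt8 {H : Type*} [NormedAddCommGroup H] [InnerProductSpace ℂ H] [CompleteSpace H]
    (D : H →L[ℂ] H) (hD : IsSelfAdjoint D)
    (f : ℝ → H) (hf : ContDiff ℝ 1 f) (hsupp : HasCompactSupport f)
    (hbdry : (inner ℂ (f 0) (D (f 0)) : ℂ).re ≤ 0) :
    (∫ t in Set.Ioi (0 : ℝ), ‖deriv f t‖ ^ 2) ≤
      (∫ t in Set.Ioi (0 : ℝ), ‖deriv f t + D (f t)‖ ^ 2) ∧
    (∫ t in Set.Ioi (0 : ℝ), ‖D (f t)‖ ^ 2) ≤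
      (∫ t in Set.Ioi (0 : ℝ), ‖deriv f t + D (f t)‖ ^ 2) := by
  have hf' : ∀ t : ℝ, HasDerivAt f (deriv f t) t := fun t =>
    (hf.differentiable one_ne_zero t).hasDerivAt
  have hDf : ∀ t : ℝ, HasDerivAt (fun t => D (f t)) (D (deriv f t)) t := by
    intro t
    have := ((D.restrictScalars ℝ).hasFDerivAt).comp_hasDerivAt t (hf' t)
    simpa [Function.comp_def] using this
  -- the boundary function g
  set g : ℝ → ℝ := fun t => (inner ℂ (f t) (D (f t)) : ℂ).re with hg_def
  have hg : ∀ t : ℝ, HasDerivAt g (2 * (inner ℂ (deriv f t) (D (f t)) : ℂ).re) t := by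
    intro t
    have h1 : HasDerivAt (fun t => (inner ℂ (f t) (D (f t)) : ℂ))
        ((inner ℂ (f t) (D (deriv f t)) : ℂ) + (inner ℂ (deriv f t) (D (f t)) : ℂ)) t :=
      (hf' t).inner ℂ (hDf t)
    have h2 := (Complex.reCLM.hasFDerivAt.comp_hasDerivAt t h1)
    have h3 : HasDerivAt g
        (((inner ℂ (f t) (D (deriv f t)) : ℂ) + (inner ℂ (deriv f t) (D (f t)) : ℂ)).re) t := h2
    convert h3 using 1
    have hsym : (inner ℂ (f t) (D (deriv f t)) : ℂ) = (inner ℂ (D (f t)) (deriv f t) : ℂ) :=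
      (hD.isSymmetric (f t) (deriv f t)).symm
    have hconj : (inner ℂ (D (f t)) (deriv f t) : ℂ) =
        starRingEnd ℂ (inner ℂ (deriv f t) (D (f t)) : ℂ) := (inner_conj_symm _ _).symm
    rw [Complex.add_re, hsym, hconj, Complex.conj_re]
    ring
  have hgderiv : ∀ t : ℝ, deriv g t = 2 * (inner ℂ (deriv f t) (D (f t)) : ℂ).re :=
    fun t => (hg t).deriv
  -- g is C¹ with compact support
  have hfD : ContDiff ℝ 1 (fun t => D (f t)) := (D.restrictScalars ℝ).contDiff.comp hf
  have hgC1 : ContDiff ℝ 1 g :=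
    Complex.reCLM.contDiff.comp (hf.inner ℂ hfD)
  have hgsupp : HasCompactSupport g := by
    apply hsupp.mono
    intro x hx
    intro hfx
    apply hx
    simp [hg_def, hfx]
  -- FTC on (0, ∞)
  have hFTC : (∫ t in Set.Ioi (0 : ℝ), deriv g t) = - g 0 :=
    hgsupp.integral_Ioi_deriv_eq hgC1 0
  -- integrability of all the pieces
  have hcont_f' : Continuous (deriv f) := hf.continuous_deriv le_rfl
  have hsupp_f' : HasCompactSupport (deriv f) := hsupp.deriv
  have hcont_Df : Continuous (fun t => D (f t)) := D.continuous.comp hf.continuous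
  have hsupp_Df : HasCompactSupport (fun t => D (f t)) := by
    apply hsupp.mono
    intro x hx hfx
    apply hx
    simp [hfx]
  have hint1 : IntegrableOn (fun t => ‖deriv f t‖ ^ 2) (Set.Ioi (0 : ℝ)) := by
    have hc1 : HasCompactSupport (fun t => ‖deriv f t‖ ^ 2) :=
      hsupp_f'.comp_left (g := fun x : H => ‖x‖ ^ 2) (by simp)
    have hc2 : Continuous (fun t => ‖deriv f t‖ ^ 2) := hcont_f'.norm.pow 2
    refine Integrable.integrableOn ?_
    exact hc2.integrable_of_hasCompactSupport hc1
  have hint2 : IntegrableOn (fun t => ‖D (f t)‖ ^ 2) (Set.Ioi (0 : ℝ)) := by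
    have hc1 : HasCompactSupport (fun t => ‖D (f t)‖ ^ 2) :=
      hsupp_Df.comp_left (g := fun x : H => ‖x‖ ^ 2) (by simp)
    have hc2 : Continuous (fun t => ‖D (f t)‖ ^ 2) := hcont_Df.norm.pow 2
    refine Integrable.integrableOn ?_
    exact hc2.integrable_of_hasCompactSupport hc1
  have hint3 : IntegrableOn (fun t => deriv g t) (Set.Ioi (0 : ℝ)) := by
    refine Integrable.integrableOn ?_
    exact ((hgC1.continuous_deriv le_rfl).integrable_of_hasCompactSupport hgsupp.deriv)
  -- pointwise expansion
  have hexp : ∀ t : ℝ, ‖deriv f t + D (f t)‖ ^ 2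
      = ‖deriv f t‖ ^ 2 + ‖D (f t)‖ ^ 2 + deriv g t := by
    intro t
    rw [hgderiv t]
    have := norm_add_sq (𝕜 := ℂ) (deriv f t) (D (f t))
    simp only [RCLike.re_to_complex] at this
    rw [this]; ring
  have hsplit : (∫ t in Set.Ioi (0 : ℝ), ‖deriv f t + D (f t)‖ ^ 2)
      = (∫ t in Set.Ioi (0 : ℝ), ‖deriv f t‖ ^ 2)
        + (∫ t in Set.Ioi (0 : ℝ), ‖D (f t)‖ ^ 2) + (- g 0) := by
    have hA : (∫ t in Set.Ioi (0 : ℝ), (‖deriv f t‖ ^ 2 + ‖D (f t)‖ ^ 2) + deriv g t)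
        = (∫ t in Set.Ioi (0 : ℝ), ‖deriv f t‖ ^ 2 + ‖D (f t)‖ ^ 2)
          + ∫ t in Set.Ioi (0 : ℝ), deriv g t :=
      integral_add (hint1.add hint2) hint3
    have hB : (∫ t in Set.Ioi (0 : ℝ), ‖deriv f t‖ ^ 2 + ‖D (f t)‖ ^ 2)
        = (∫ t in Set.Ioi (0 : ℝ), ‖deriv f t‖ ^ 2)
          + ∫ t in Set.Ioi (0 : ℝ), ‖D (f t)‖ ^ 2 :=
      integral_add hint1 hint2
    rw [integral_congr_ae (Filter.Eventually.of_forall fun t => hexp t), hA, hB, hFTC]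
  have h1nn : (0:ℝ) ≤ ∫ t in Set.Ioi (0 : ℝ), ‖deriv f t‖ ^ 2 :=
    integral_nonneg fun t => by positivity
  have h2nn : (0:ℝ) ≤ ∫ t in Set.Ioi (0 : ℝ), ‖D (f t)‖ ^ 2 :=
    integral_nonneg fun t => by positivity
  have hbnn : (0:ℝ) ≤ - g 0 := by simpa [hg_def] using neg_nonneg.mpr hbdry
  constructor
  · rw [hsplit]; linarith
  · rw [hsplit]; linarith
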